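/- Fix a positive rational q and let F(A₁) = q·T₁(0,A₁) − T₂(0,A₁) for A₁ ∈ (0,1). Then F(A₁) tends to −∞ as A₁ tends to 0 from the right, and F(A₁) tends to +∞ as A₁ tends to 1 from the left. -/

import Mathlib

open Real Filter Topology
open MeasureTheory intervalIntegral

/-- The complete elliptic integral of the first kind,
`K(κ) = ∫₀¹ dv / √((1 - v²)(1 - κ² v²))`. -/
noncomputable def K (κ : ℝ) : ℝ :=
  ∫ v in (0:ℝ)..1, 1 / Real.sqrt ((1 - v ^ 2) * (1 - κ ^ 2 * v ^ 2))

/-- The modulus `κ₁(β, A₁)`, defined by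
`κ₁² = (A₁(1-β) + √(1-4βA₁²)) / (2√(1-4βA₁²))`. -/
noncomputable def κ₁ (β A₁ : ℝ) : ℝ :=
  Real.sqrt ((A₁ * (1 - β) + Real.sqrt (1 - 4 * β * A₁ ^ 2)) /
    (2 * Real.sqrt (1 - 4 * β * A₁ ^ 2)))

/-- The modulus `κ₂(β)`, defined by `κ₂² = β/(1+β)`. -/
noncomputable def κ₂ (β : ℝ) : ℝ := Real.sqrt (β / (1 + β))

/-- The period `T₁(β,A₁) = 2√(2/a) (1-4βA₁²)^{-1/4} K(κ₁(β,A₁))` of the ξ-motion. -/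
noncomputable def T₁ (a β A₁ : ℝ) : ℝ :=
  2 * Real.sqrt (2 / a) / (1 - 4 * β * A₁ ^ 2) ^ ((1:ℝ)/4) * K (κ₁ β A₁)

/-- The period `T₂(β,A₁) = 2/√(a A₁ (1+β)) · K(κ₂(β))` of the φ-motion. -/
noncomputable def T₂ (a β A₁ : ℝ) : ℝ :=
  2 / Real.sqrt (a * A₁ * (1 + β)) * K (κ₂ β)

/-- For fixed positive rational `q`, the function `F(A₁) = q T₁(0,A₁) - T₂(0,A₁)`
tends to `-∞` as `A₁ → 0⁺` and to `+∞` as `A₁ → 1⁻`. -/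
lemma sqrt_prod_lb {κ v : ℝ} (hκ : κ ^ 2 ≤ 1) (h0 : 0 ≤ v) (h1 : v ≤ 1) :
    Real.sqrt ((1 - κ ^ 2) * (1 - v)) ≤ Real.sqrt ((1 - v ^ 2) * (1 - κ ^ 2 * v ^ 2)) := by
  apply Real.sqrt_le_sqrt
  have hv2 : v ^ 2 ≤ v := by nlinarith
  have hκv : κ ^ 2 * v ^ 2 ≤ κ ^ 2 := by nlinarith [sq_nonneg κ, sq_nonneg v]
  nlinarith [sq_nonneg κ, sq_nonneg v]

lemma K_integrable {κ : ℝ} (hκ : κ ^ 2 < 1) :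
    IntervalIntegrable (fun v => 1 / Real.sqrt ((1 - v ^ 2) * (1 - κ ^ 2 * v ^ 2)))
      volume (0:ℝ) 1 := by
  have hbase : IntervalIntegrable (fun x : ℝ => x ^ (-(1/2) : ℝ)) volume 0 1 :=
    intervalIntegral.intervalIntegrable_rpow' (by norm_num)
  have hg : IntervalIntegrable (fun x : ℝ => (1 - x) ^ (-(1/2) : ℝ)) volume 0 1 := by
    simpa using (hbase.comp_sub_left 1).symm
  have hg' := hg.const_mul (1 / Real.sqrt (1 - κ ^ 2))
  apply hg'.mono_fun
  · refine (Measurable.div measurable_const ?_).aestronglyMeasurable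
    exact (Real.continuous_sqrt.comp (by fun_prop)).measurable
  · have hne : ∀ᵐ v ∂(volume.restrict (Set.uIoc (0:ℝ) 1)), v ≠ (1:ℝ) := by
      refine ae_restrict_of_ae ?_
      rw [ae_iff]
      have hs : {a : ℝ | ¬ a ≠ 1} = {1} := by ext x; simp
      rw [hs]
      exact Real.volume_singleton
    filter_upwards [hne, ae_restrict_mem measurableSet_uIoc] with v hv1 hv2
    rw [Set.uIoc_of_le zero_le_one] at hv2
    have h0 : 0 ≤ v := le_of_lt hv2.1
    have h1 : v < 1 := lt_of_le_of_ne hv2.2 hv1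
    have hd : 0 < Real.sqrt ((1 - κ ^ 2) * (1 - v)) := by
      apply Real.sqrt_pos.2; nlinarith
    have hrw : (1 - v) ^ (-(1/2) : ℝ) = 1 / Real.sqrt (1 - v) := by
      rw [Real.rpow_neg (by linarith), Real.sqrt_eq_rpow]
      simp
    have key : 1 / Real.sqrt ((1 - v ^ 2) * (1 - κ ^ 2 * v ^ 2)) ≤
        1 / Real.sqrt (1 - κ ^ 2) * (1 / Real.sqrt (1 - v)) := by
      rw [div_mul_div_comm, one_mul, ← Real.sqrt_mul (by nlinarith)]
      exact one_div_le_one_div_of_le hd (sqrt_prod_lb hκ.le h0 h1.le)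
    calc ‖1 / Real.sqrt ((1 - v ^ 2) * (1 - κ ^ 2 * v ^ 2))‖
        = 1 / Real.sqrt ((1 - v ^ 2) * (1 - κ ^ 2 * v ^ 2)) := by
          rw [Real.norm_eq_abs, abs_of_nonneg]; positivity
      _ ≤ 1 / Real.sqrt (1 - κ ^ 2) * ((1 - v) ^ (-(1/2) : ℝ)) := by rw [hrw]; exact key
      _ ≤ ‖1 / Real.sqrt (1 - κ ^ 2) * ((1 - v) ^ (-(1/2) : ℝ))‖ := le_abs_self _

lemma K_zero_pos : 0 < K 0 := by
  rw [K]
  apply intervalIntegral_pos_of_pos_on (K_integrable (by norm_num)) _ one_pos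
  intro x hx
  have h1 : (0:ℝ) < (1 - x ^ 2) * (1 - 0 ^ 2 * x ^ 2) := by nlinarith [hx.1, hx.2]
  positivity

lemma K_le_two {κ : ℝ} (h : κ ^ 2 ≤ 3/4) : K κ ≤ 2 * K 0 := by
  rw [K, K, ← intervalIntegral.integral_const_mul]
  apply integral_mono_on zero_le_one (K_integrable (by nlinarith))
    ((K_integrable (by norm_num)).const_mul 2)
  rintro v ⟨h0v, h1v⟩
  rcases eq_or_lt_of_le h1v with rfl | hlt
  · norm_num
  · rw [mul_one_div]
    have ha : (0:ℝ) < 1 - v ^ 2 := by nlinarith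
    have hb : (0:ℝ) < 1 - κ ^ 2 * v ^ 2 := by
      nlinarith [mul_nonneg (sq_nonneg κ) (by nlinarith : (0:ℝ) ≤ 1 - v ^ 2)]
    have hP : (0:ℝ) < (1 - v ^ 2) * (1 - κ ^ 2 * v ^ 2) := mul_pos ha hb
    have hQ : (0:ℝ) < (1 - v ^ 2) * (1 - 0 ^ 2 * v ^ 2) := by nlinarith
    rw [div_le_div_iff₀ (Real.sqrt_pos.2 hP) (Real.sqrt_pos.2 hQ), one_mul]
    have h4 : (2:ℝ) = Real.sqrt 4 := by
      rw [show (4:ℝ) = 2^2 by norm_num, Real.sqrt_sq (by norm_num)]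
    rw [h4, ← Real.sqrt_mul (by norm_num)]
    apply Real.sqrt_le_sqrt
    nlinarith [mul_nonneg ha.le (by nlinarith [mul_nonneg (sq_nonneg κ) (sq_nonneg v)] :
      (0:ℝ) ≤ 3 - 4 * (κ ^ 2 * v ^ 2))]

lemma K_lb {κ : ℝ} (h0 : 0 < κ) (h1 : κ < 1) : -Real.log (1 - κ) / (2 * κ) ≤ K κ := by
  have hden : ∀ v ∈ Set.Icc (0:ℝ) 1, (0:ℝ) < 1 - κ * v := by
    rintro v ⟨hv0, hv1⟩; nlinarith
  have hcont : ContinuousOn (fun v : ℝ => 1 / (2 * (1 - κ * v))) (Set.Icc 0 1) := by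
    apply ContinuousOn.div continuousOn_const (by fun_prop)
    intro v hv
    have := hden v hv; positivity
  have hint : IntervalIntegrable (fun v : ℝ => 1 / (2 * (1 - κ * v))) volume 0 1 := by
    apply ContinuousOn.intervalIntegrable
    rwa [Set.uIcc_of_le zero_le_one]
  have hval : (∫ v in (0:ℝ)..1, 1 / (2 * (1 - κ * v))) = -Real.log (1 - κ) / (2 * κ) := by
    have hderiv : ∀ v ∈ Set.uIcc (0:ℝ) 1,
        HasDerivAt (fun v : ℝ => -(1 / (2 * κ)) * Real.log (1 - κ * v))
          (1 / (2 * (1 - κ * v))) v := by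
      intro v hv
      rw [Set.uIcc_of_le zero_le_one] at hv
      have hpos := hden v hv
      have hd : HasDerivAt (fun v : ℝ => 1 - κ * v) (0 - κ * 1) v :=
        (hasDerivAt_const v (1:ℝ)).sub ((hasDerivAt_id v).const_mul κ)
      have := (hd.log (ne_of_gt hpos)).const_mul (-(1 / (2 * κ)))
      convert this using 1
      all_goals try rfl
      field_simp
      ring
    rw [intervalIntegral.integral_eq_sub_of_hasDerivAt hderiv hint]
    simp [Real.log_one]
    ring
  rw [← hval, K]
  have hne : ∀ᵐ v ∂(volume.restrict (Set.Icc (0:ℝ) 1)), v ≠ (1:ℝ) := by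
    refine ae_restrict_of_ae ?_
    rw [ae_iff]
    have hs : {a : ℝ | ¬ a ≠ 1} = {1} := by ext x; simp
    rw [hs]; exact Real.volume_singleton
  apply integral_mono_ae_restrict zero_le_one hint (K_integrable (by nlinarith))
  filter_upwards [hne, ae_restrict_mem measurableSet_Icc] with v hv1 hv2
  obtain ⟨h0v, h1v'⟩ := hv2
  have h1v : v < 1 := lt_of_le_of_ne h1v' hv1
  have hpos : (0:ℝ) < 1 - κ * v := hden v ⟨h0v, h1v'⟩
  have ha : (0:ℝ) < 1 - v ^ 2 := by nlinarith
  have hb : (0:ℝ) < 1 - κ ^ 2 * v ^ 2 := by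
    nlinarith [mul_nonneg (sq_nonneg κ) (by nlinarith : (0:ℝ) ≤ 1 - v ^ 2)]
  have hP : (0:ℝ) < (1 - v ^ 2) * (1 - κ ^ 2 * v ^ 2) := mul_pos ha hb
  have hub : Real.sqrt ((1 - v ^ 2) * (1 - κ ^ 2 * v ^ 2)) ≤ 2 * (1 - κ * v) := by
    rw [show 2 * (1 - κ * v) = Real.sqrt ((2 * (1 - κ * v)) ^ 2) by
      rw [Real.sqrt_sq (by positivity)]]
    apply Real.sqrt_le_sqrt
    have hA : 1 - v ^ 2 ≤ 2 * (1 - κ * v) := by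
      nlinarith [mul_nonneg (by linarith : (0:ℝ) ≤ 1 - κ) h0v, sq_nonneg (1 - v)]
    have hB : 1 - κ ^ 2 * v ^ 2 ≤ 2 * (1 - κ * v) := by nlinarith [sq_nonneg (1 - κ * v)]
    nlinarith [mul_le_mul_of_nonneg_right hA hb.le,
      mul_le_mul_of_nonneg_left hB (by positivity : (0:ℝ) ≤ 2 * (1 - κ * v))]
  exact one_div_le_one_div_of_le (Real.sqrt_pos.2 hP) hub

lemma T1_eq (a A₁ : ℝ) : T₁ a 0 A₁ = 2 * Real.sqrt (2/a) * K (Real.sqrt ((A₁ + 1)/2)) := by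
  norm_num [T₁, κ₁, Real.one_rpow]

lemma T2_eq (a A₁ : ℝ) : T₂ a 0 A₁ = 2 / Real.sqrt (a * A₁) * K 0 := by
  norm_num [T₂, κ₂]

theorem F_limits_at_beta_zero (a : ℝ) (ha : 0 < a) (q : ℚ) (hq : 0 < q) :
    Tendsto (fun A₁ => (q : ℝ) * T₁ a 0 A₁ - T₂ a 0 A₁) (𝓝[>] (0:ℝ)) atBot ∧
    Tendsto (fun A₁ => (q : ℝ) * T₁ a 0 A₁ - T₂ a 0 A₁) (𝓝[<] (1:ℝ)) atTop := by
  have hK0 := K_zero_pos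
  have hqpos : (0:ℝ) < (q:ℝ) := by exact_mod_cast hq
  constructor
  · set C : ℝ := (q:ℝ) * (2 * Real.sqrt (2/a)) * (2 * K 0) with hC
    have hev : ∀ᶠ A₁ in 𝓝[>] (0:ℝ),
        (q:ℝ) * T₁ a 0 A₁ - T₂ a 0 A₁ ≤ C + -(2 * K 0 * (Real.sqrt (a * A₁))⁻¹) := by
      filter_upwards [Ioo_mem_nhdsGT (by norm_num : (0:ℝ) < 1/2)] with A₁ hA₁
      obtain ⟨hA0, hAh⟩ := hA₁
      rw [T1_eq, T2_eq]
      have hκsq : (Real.sqrt ((A₁ + 1)/2)) ^ 2 = (A₁ + 1)/2 := Real.sq_sqrt (by linarith)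
      have hKle : K (Real.sqrt ((A₁ + 1)/2)) ≤ 2 * K 0 := K_le_two (by rw [hκsq]; linarith)
      have h1 : (q:ℝ) * (2 * Real.sqrt (2/a) * K (Real.sqrt ((A₁ + 1)/2))) ≤ C := by
        rw [hC, show (q:ℝ) * (2 * Real.sqrt (2/a) * K (Real.sqrt ((A₁ + 1)/2))) =
          ((q:ℝ) * (2 * Real.sqrt (2/a))) * K (Real.sqrt ((A₁ + 1)/2)) by ring]
        exact mul_le_mul_of_nonneg_left hKle (by positivity)
      have h2 : 2 / Real.sqrt (a * A₁) * K 0 = 2 * K 0 * (Real.sqrt (a * A₁))⁻¹ := by ring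
      linarith
    apply tendsto_atBot_mono' _ hev
    have h1 : Tendsto (fun A₁ : ℝ => Real.sqrt (a * A₁)) (𝓝[>] 0) (𝓝[>] 0) := by
      rw [tendsto_nhdsWithin_iff]
      constructor
      · have hco : Continuous fun A₁ : ℝ => Real.sqrt (a * A₁) := by fun_prop
        have h := hco.tendsto 0
        simp only [mul_zero, Real.sqrt_zero] at h
        exact h.mono_left nhdsWithin_le_nhds
      · filter_upwards [self_mem_nhdsWithin] with x hx
        exact Real.sqrt_pos.2 (mul_pos ha hx)
    have h2 := tendsto_inv_nhdsGT_zero.comp h1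
    have h3 := h2.const_mul_atTop (show (0:ℝ) < 2 * K 0 by positivity)
    have h4 := tendsto_neg_atTop_atBot.comp h3
    have h5 := tendsto_atBot_add_const_left _ C h4
    simpa [Function.comp] using h5
  · set C₂ : ℝ := 2 / Real.sqrt (a * (1/2)) * K 0 with hC₂
    set c : ℝ := (q:ℝ) * Real.sqrt (2/a) with hc
    have hcpos : 0 < c := by rw [hc]; positivity
    have hev : ∀ᶠ A₁ in 𝓝[<] (1:ℝ),
        c * -Real.log (1 - Real.sqrt ((A₁ + 1)/2)) + -C₂ ≤
          (q:ℝ) * T₁ a 0 A₁ - T₂ a 0 A₁ := by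
      filter_upwards [Ioo_mem_nhdsLT (show (1:ℝ)/2 < 1 by norm_num)] with A₁ hA₁
      obtain ⟨hAh, hA1⟩ := hA₁
      rw [T1_eq, T2_eq]
      have hκsq : (Real.sqrt ((A₁ + 1)/2)) ^ 2 = (A₁ + 1)/2 := Real.sq_sqrt (by linarith)
      have hκpos : 0 < Real.sqrt ((A₁ + 1)/2) := Real.sqrt_pos.2 (by linarith)
      have hκlt : Real.sqrt ((A₁ + 1)/2) < 1 := by
        rw [Real.sqrt_lt' one_pos]; nlinarith
      have hlog : 0 ≤ -Real.log (1 - Real.sqrt ((A₁ + 1)/2)) := by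
        have := Real.log_nonpos (x := 1 - Real.sqrt ((A₁ + 1)/2)) (by linarith) (by linarith)
        linarith
      have hKlb : -Real.log (1 - Real.sqrt ((A₁ + 1)/2)) / 2 ≤ K (Real.sqrt ((A₁ + 1)/2)) := by
        refine le_trans ?_ (K_lb hκpos hκlt)
        exact div_le_div_of_nonneg_left hlog (by positivity) (by nlinarith)
      have hT2 : 2 / Real.sqrt (a * A₁) * K 0 ≤ C₂ := by
        rw [hC₂]
        apply mul_le_mul_of_nonneg_right _ hK0.le
        exact div_le_div_of_nonneg_left (by norm_num)
          (Real.sqrt_pos.2 (by positivity)) (Real.sqrt_le_sqrt (by nlinarith))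
      have h5 : c * -Real.log (1 - Real.sqrt ((A₁ + 1)/2)) ≤
          (q:ℝ) * (2 * Real.sqrt (2/a) * K (Real.sqrt ((A₁ + 1)/2))) := by
        have heq : c * -Real.log (1 - Real.sqrt ((A₁ + 1)/2)) =
            ((q:ℝ) * (2 * Real.sqrt (2/a))) *
              (-Real.log (1 - Real.sqrt ((A₁ + 1)/2)) / 2) := by
          rw [hc]; ring
        rw [heq, show (q:ℝ) * (2 * Real.sqrt (2/a) * K (Real.sqrt ((A₁ + 1)/2))) =
          ((q:ℝ) * (2 * Real.sqrt (2/a))) * K (Real.sqrt ((A₁ + 1)/2)) by ring]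
        exact mul_le_mul_of_nonneg_left hKlb (by positivity)
      linarith
    apply tendsto_atTop_mono' _ hev
    have h1 : Tendsto (fun A₁ : ℝ => 1 - Real.sqrt ((A₁ + 1)/2)) (𝓝[<] 1) (𝓝[>] 0) := by
      rw [tendsto_nhdsWithin_iff]
      constructor
      · have hco : Continuous fun A₁ : ℝ => 1 - Real.sqrt ((A₁ + 1)/2) := by fun_prop
        have h := hco.tendsto 1
        rw [show (1:ℝ) - Real.sqrt ((1 + 1)/2) = 0 by norm_num] at h
        exact h.mono_left nhdsWithin_le_nhds
      · filter_upwards [self_mem_nhdsWithin] with x hx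
        have hx1 : x < 1 := hx
        have hs : Real.sqrt ((x + 1)/2) < 1 := by
          rw [Real.sqrt_lt' one_pos]; nlinarith
        simpa using hs
    have h2 := Real.tendsto_log_nhdsGT_zero.comp h1
    have h3 := tendsto_neg_atBot_atTop.comp h2
    have h4 := h3.const_mul_atTop hcpos
    have h5 := tendsto_atTop_add_const_right _ (-C₂) h4
    simpa [Function.comp] using h5
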